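/- (Inductive step of the main theorem) Let n ≥ 2, let W_1, …, W_n be nonempty subsets of M satisfying condition (SD), let i ∈ {1,…,n−1}, and let ≼ be a total preorder on M faithful to W_i such that all worlds outside W_1 ∪ ⋯ ∪ W_i are pairwise ≼-equivalent. Define A = W_{i+1} and C = ∅ if W_i ∩ W_{i+1} = ∅, and A = W_i ∩ W_{i+1} and C = W_{i+1} \ W_i otherwise; let B = M\C. Let ≼' be the lexicographic revision of ≼ by A and let ≼'' be the moderate contraction of ≼' by B. Then min(M, ≼'') = W_{i+1}, and all worlds outside W_1 ∪ ⋯ ∪ W_i ∪ W_{i+1} are pairwise ≼''-equivalent. -/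
import Mathlib


/-- A possible world over the propositional variables `P`. -/
abbrev World (P : Type) := P → Bool

/-- `minSet S le` is the set of `le`-minimal elements of `S`. -/
def minSet {P : Type} (S : Set (World P)) (le : World P → World P → Prop) :
    Set (World P) :=
  {r | r ∈ S ∧ ∀ r' ∈ S, le r r'}

/-- A total preorder: reflexive, transitive and total. -/
def TotalPreorder {P : Type} (le : World P → World P → Prop) : Prop :=
  Reflexive le ∧ Transitive le ∧ ∀ r r', le r r' ∨ le r' r

/-- `le` is faithful to `W` iff the `le`-minimal worlds are exactly `W`. -/
def Faithful {P : Type} (le : World P → World P → Prop) (W : Set (World P)) : Prop :=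
  minSet Set.univ le = W

/-- The strict part of a preorder. -/
def strictPart {P : Type} (le : World P → World P → Prop) (r r' : World P) : Prop :=
  le r r' ∧ ¬ le r' r

/-- The full-meet preorder of a belief set `W`. -/
def fullMeet {P : Type} (W : Set (World P)) : World P → World P → Prop :=
  fun r r' => r ∈ W ∨ r' ∉ W

/-- Type-B distance: the symmetric difference of the model sets. -/
def distB {P : Type} (W1 W2 : Set (World P)) : Set (World P) :=
  (W1 \ W2) ∪ (W2 \ W1)

/-- Condition (SD) on a sequence of belief sets. -/
def SD {P : Type} {n : ℕ} (W : Fin n → Set (World P)) : Prop :=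
  ∀ i j m : Fin n, i < j → j < m → distB (W j) (W m) ⊆ distB (W i) (W m)

/-- Lexicographic revision of the preorder `le` by the (nonempty) input `A`. -/
def lexRev {P : Type} (le : World P → World P → Prop) (A : Set (World P)) :
    World P → World P → Prop :=
  fun r r' => (r ∈ A ∧ r' ∉ A) ∨ ((r ∈ A ↔ r' ∈ A) ∧ le r r')

/-- `le''` is the moderate contraction of `le` (faithful to `R`) by `B`:
conditions (C1), (C2), (MC) and faithfulness to `R ∪ min(M\B, le)`. -/
def IsModCon {P : Type} (le : World P → World P → Prop) (R B : Set (World P))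
    (le'' : World P → World P → Prop) : Prop :=
  TotalPreorder le'' ∧
  (∀ r r', r ∈ B → r' ∈ B → (le'' r r' ↔ le r r')) ∧
  (∀ r r', r ∉ B → r' ∉ B → (le'' r r' ↔ le r r')) ∧
  (∀ r r', r ∉ B → r' ∈ B → r' ∉ R ∪ minSet Bᶜ le → strictPart le'' r r') ∧
  minSet Set.univ le'' = R ∪ minSet Bᶜ le

theorem statement5 {P : Type} [Fintype P] [Nonempty P] {n : ℕ} (hn : 2 ≤ n)
    (W : Fin n → Set (World P)) (hne : ∀ i, (W i).Nonempty) (hSD : SD W)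
    (i : ℕ) (hi : i + 1 < n)
    (le : World P → World P → Prop) (hle : TotalPreorder le)
    (hfaith : Faithful le (W ⟨i, by omega⟩))
    (hout : ∀ r r', r ∉ (⋃ (j : Fin n) (_ : (j : ℕ) ≤ i), W j) →
      r' ∉ (⋃ (j : Fin n) (_ : (j : ℕ) ≤ i), W j) → le r r' ∧ le r' r)
    (A C : Set (World P))
    (hAC : (W ⟨i, by omega⟩ ∩ W ⟨i + 1, hi⟩ = ∅ ∧
              A = W ⟨i + 1, hi⟩ ∧ C = ∅) ∨
           (W ⟨i, by omega⟩ ∩ W ⟨i + 1, hi⟩ ≠ ∅ ∧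
              A = W ⟨i, by omega⟩ ∩ W ⟨i + 1, hi⟩ ∧
              C = W ⟨i + 1, hi⟩ \ W ⟨i, by omega⟩))
    (le'' : World P → World P → Prop)
    (hmod : IsModCon (lexRev le A) (minSet Set.univ (lexRev le A)) Cᶜ le'') :
    minSet Set.univ le'' = W ⟨i + 1, hi⟩ ∧
    ∀ r r', r ∉ ((⋃ (j : Fin n) (_ : (j : ℕ) ≤ i), W j) ∪ W ⟨i + 1, hi⟩) →
      r' ∉ ((⋃ (j : Fin n) (_ : (j : ℕ) ≤ i), W j) ∪ W ⟨i + 1, hi⟩) →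
      le'' r r' ∧ le'' r' r := by

  obtain ⟨hrefl, htrans, htot⟩ := hle
  set le' := lexRev le A with hle'def
  obtain ⟨hle''tp, hC1, hC2, hMC, hmin''⟩ := hmod
  have hf : minSet Set.univ le = W ⟨i, by omega⟩ := hfaith
  have key : ∀ x, x ∈ W ⟨i+1, hi⟩ → x ∉ W ⟨i, by omega⟩ →
      x ∉ (⋃ (j : Fin n) (_ : (j : ℕ) ≤ i), W j) := by
    intro x hx1 hxi hxU
    simp only [Set.mem_iUnion] at hxU
    obtain ⟨j, hj, hxj⟩ := hxU
    have hji : (j : ℕ) < i := by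
      rcases lt_or_eq_of_le hj with h | h
      · exact h
      · exfalso; apply hxi
        have hje : j = ⟨i, by omega⟩ := Fin.ext h
        rwa [hje] at hxj
    have hsub := hSD j ⟨i, by omega⟩ ⟨i+1, hi⟩ (by simp [Fin.lt_def, hji])
      (by simp [Fin.lt_def])
    have hxd : x ∈ distB (W ⟨i, by omega⟩) (W ⟨i+1, hi⟩) := Or.inr ⟨hx1, hxi⟩
    rcases hsub hxd with h | h
    · exact h.2 hx1
    · exact h.2 hxj
  have hfacts : A.Nonempty ∧ A ∪ C = W ⟨i+1, hi⟩ ∧ A ⊆ W ⟨i+1, hi⟩ ∧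
      C ⊆ W ⟨i+1, hi⟩ ∧ (∀ x ∈ C, x ∉ A) ∧
      (∀ x ∈ C, x ∉ ⋃ (j : Fin n) (_ : (j : ℕ) ≤ i), W j) ∧
      (∀ a ∈ A, ∀ a' ∈ A, le a a') := by
    rcases hAC with ⟨hdis, hA, hC⟩ | ⟨hnd, hA, hC⟩
    · subst hA; subst hC
      refine ⟨hne _, by simp, subset_rfl, by simp, by simp, by simp, ?_⟩
      intro a ha a' ha'
      have hka := key a ha (fun h => Set.eq_empty_iff_forall_notMem.mp hdis a ⟨h, ha⟩)
      have hka' := key a' ha' (fun h => Set.eq_empty_iff_forall_notMem.mp hdis a' ⟨h, ha'⟩)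
      exact (hout a a' hka hka').1
    · subst hA; subst hC
      refine ⟨Set.nonempty_iff_ne_empty.mpr hnd, ?_, Set.inter_subset_right,
        Set.diff_subset, ?_, ?_, ?_⟩
      · ext x; constructor
        · rintro (⟨_, h⟩ | ⟨h, _⟩) <;> exact h
        · intro hx
          by_cases h : x ∈ W ⟨i, by omega⟩
          · exact Or.inl ⟨h, hx⟩
          · exact Or.inr ⟨hx, h⟩
      · intro x hx hxA; exact hx.2 hxA.1
      · intro x hx; exact key x hx.1 hx.2
      · intro a ha a' ha'
        have hmem : a ∈ minSet Set.univ le := by rw [hf]; exact ha.1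
        exact hmem.2 a' trivial
  obtain ⟨hAne, hACU, hAsub, hCsub, hCA, hCout, hAeq⟩ := hfacts
  have hminle' : minSet Set.univ le' = A := by
    ext r; constructor
    · rintro ⟨-, hmin⟩
      obtain ⟨a, ha⟩ := hAne
      by_contra hrA
      rcases hmin a trivial with ⟨hra, _⟩ | ⟨hiff, _⟩
      · exact hrA hra
      · exact hrA (hiff.mpr ha)
    · intro hrA
      refine ⟨trivial, fun r' _ => ?_⟩
      by_cases hr' : r' ∈ A
      · exact Or.inr ⟨iff_of_true hrA hr', hAeq r hrA r' hr'⟩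
      · exact Or.inl ⟨hrA, hr'⟩
  have hminC : minSet C le' = C := by
    ext c; constructor
    · exact fun h => h.1
    · intro hc
      refine ⟨hc, fun c' hc' => Or.inr ⟨iff_of_false (hCA c hc) (hCA c' hc'), ?_⟩⟩
      exact (hout c c' (hCout c hc) (hCout c' hc')).1
  have h1 : minSet Set.univ le'' = W ⟨i+1, hi⟩ := by
    rw [hmin'', hminle', compl_compl, hminC, hACU]
  refine ⟨h1, fun r r' hr hr' => ?_⟩
  have hrU : r ∉ ⋃ (j : Fin n) (_ : (j : ℕ) ≤ i), W j := fun h => hr (Or.inl h)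
  have hr'U : r' ∉ ⋃ (j : Fin n) (_ : (j : ℕ) ≤ i), W j := fun h => hr' (Or.inl h)
  have hr1 : r ∉ W ⟨i+1, hi⟩ := fun h => hr (Or.inr h)
  have hr'1 : r' ∉ W ⟨i+1, hi⟩ := fun h => hr' (Or.inr h)
  have hrC : r ∈ Cᶜ := fun h => hr1 (hCsub h)
  have hr'C : r' ∈ Cᶜ := fun h => hr'1 (hCsub h)
  have hrA : r ∉ A := fun h => hr1 (hAsub h)
  have hr'A : r' ∉ A := fun h => hr'1 (hAsub h)
  have hlee := hout r r' hrU hr'U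
  exact ⟨(hC1 r r' hrC hr'C).mpr (Or.inr ⟨iff_of_false hrA hr'A, hlee.1⟩),
    (hC1 r' r hr'C hrC).mpr (Or.inr ⟨iff_of_false hr'A hrA, hlee.2⟩)⟩
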